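/- Let c be an admissible coefficient function satisfying (Cubic values), and assume a_1 ≥ 2. Let γ ∈ ℤ^{μ_A−2} be non-negative with |γ| = 3 and γ − e_{i,j} ≥ 0 for some (i,j) with a_i ≥ 3 and j ≥ 2. Then c(γ,1) = 0. -/

import Mathlib

/- Common framework: Frobenius manifolds for orbifold projective lines ℙ¹_A,
   following Ishibashi–Shiraishi–Takahashi. -/

namespace FrobeniusUniqueness

/-- A point index `(i, j)` labelling a flat coordinate `t_{i,j}`. -/
abbrev Pt : Type := Fin 3 × ℕ

/-- A non-negative element of `ℤ^{μ_A − 2}`: an exponent vector `α` with `α_{i,j} ∈ ℕ`. -/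
abbrev Expv : Type := Pt →₀ ℕ

/-- The standard basis vector `e_{i,j}`. -/
noncomputable def e (i : Fin 3) (j : ℕ) : Expv := Finsupp.single (i, j) 1

/-- The length `|α|` of an exponent vector. -/
def len (α : Expv) : ℕ := α.sum fun _ n => n

/-- A point index `(i,j)` is valid if `1 ≤ j ≤ a_i − 1`. -/
def ValidPt (A : Fin 3 → ℕ) (p : Pt) : Prop := 1 ≤ p.2 ∧ p.2 ≤ A p.1 - 1

/-- An exponent vector lies in `ℤ^{μ_A − 2}` iff it is supported on valid indices. -/
def Valid (A : Fin 3 → ℕ) (α : Expv) : Prop := ∀ p ∈ α.support, ValidPt A p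

/-- The combinatorial factor `s_{a,b,c}`. -/
def sFactor (a b c : ℕ) : ℂ :=
  if a = b ∧ b = c then 6
  else if a ≠ b ∧ b ≠ c ∧ a ≠ c then 1
  else 2

/-- The index type for the flat coordinates `t_1`, `t_{i,j}`, `t_{μ_A}`. -/
inductive Idx : Type where
  | one : Idx
  | pt : Fin 3 → ℕ → Idx
  | mu : Idx
deriving DecidableEq

/-- Validity of a flat coordinate index. -/
def ValidIdx (A : Fin 3 → ℕ) : Idx → Prop
  | .one => True
  | .pt i j => ValidPt A (i, j)
  | .mu => True

/-- The metric `η` in the frame `∂_1, ∂_{i,j}, ∂_{μ_A}`. -/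
noncomputable def eta (A : Fin 3 → ℕ) : Idx → Idx → ℂ
  | .one, .mu => 1
  | .mu, .one => 1
  | .pt i j, .pt i' j' =>
      if i = i' ∧ j + j' = A i ∧ 1 ≤ j ∧ j ≤ A i - 1 then (A i : ℂ)⁻¹ else 0
  | _, _ => 0

/-- The point indices occurring in an `Idx`. -/
def ptsOf : Idx → List Pt
  | .pt i j => [(i, j)]
  | _ => []

/-- The number of occurrences of `μ_A` in an `Idx`. -/
def muCount : Idx → ℕ
  | .mu => 1
  | _ => 0

/-- The factor produced when the monomial `t^{β + Σ_{p ∈ ps} e_p}` is differentiated by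
`∏_{p ∈ ps} ∂_p`, leaving the monomial `t^β`. -/
noncomputable def dfac (β : Expv) : List Pt → ℕ
  | [] => 1
  | p :: ps =>
      ((β + ((ps.map fun q => (Finsupp.single q 1 : Expv)).sum) + Finsupp.single p 1 : Expv) p)
        * dfac β ps

/-- `der A c a b d β m` is the coefficient of `t^β · e^{m·t_{μ_A}}` in `∂_a ∂_b ∂_d F`, where
`F = (1/2)t_1²t_{μ_A} + (1/2)t_1·Σ_{i,j}(1/a_i)t_{i,j}t_{i,a_i−j} + Σ_{α,m} c(α,m)t^α e^{m t_{μ_A}}`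
is the potential of the coefficient function `c`.  In particular `∂_1∂_a∂_b F = η(∂_a,∂_b)`. -/
noncomputable def der (A : Fin 3 → ℕ) (c : Expv → ℕ → ℂ) (a b d : Idx) (β : Expv) (m : ℕ) : ℂ :=
  if a = .one then (if β = 0 ∧ m = 0 then eta A b d else 0)
  else if b = .one then (if β = 0 ∧ m = 0 then eta A a d else 0)
  else if d = .one then (if β = 0 ∧ m = 0 then eta A a b else 0)
  else
    (m : ℂ) ^ (muCount a + muCount b + muCount d) *
      (dfac β (ptsOf a ++ ptsOf b ++ ptsOf d) : ℂ) *
      c (β + (((ptsOf a ++ ptsOf b ++ ptsOf d).map fun q => (Finsupp.single q 1 : Expv)).sum)) m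

/-- The coefficient of `t^β · e^{m·t_{μ_A}}` in
`Σ_{σ,τ} ∂_a∂_b∂_σF · η^{στ} · ∂_τ∂_d∂_e F`, where `(η^{στ})` is the inverse matrix of
`(η_{στ})` (so the only nonzero entries are `η^{1,μ_A} = η^{μ_A,1} = 1` and
`η^{(i,j),(i,a_i−j)} = a_i`). -/
noncomputable def quadTerm (A : Fin 3 → ℕ) (c : Expv → ℕ → ℂ) (a b d e' : Idx)
    (β : Expv) (m : ℕ) : ℂ :=
  ∑ x ∈ Finset.HasAntidiagonal.antidiagonal β, ∑ y ∈ Finset.HasAntidiagonal.antidiagonal m,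
    (der A c a b .one x.1 y.1 * der A c .mu d e' x.2 y.2
     + der A c a b .mu x.1 y.1 * der A c .one d e' x.2 y.2
     + ∑ i : Fin 3, ∑ j ∈ Finset.Icc 1 (A i - 1),
         (A i : ℂ) * der A c a b (.pt i j) x.1 y.1 * der A c (.pt i (A i - j)) d e' x.2 y.2)

/-- `χ_A = 1/a_1 + 1/a_2 + 1/a_3 − 1`. -/
noncomputable def chi (A : Fin 3 → ℕ) : ℚ := (A 0 : ℚ)⁻¹ + (A 1 : ℚ)⁻¹ + (A 2 : ℚ)⁻¹ - 1

/-- The degree of the monomial `t^α`: `Σ_{i,j} α_{i,j}·(a_i − j)/a_i`. -/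
noncomputable def deg (A : Fin 3 → ℕ) (α : Expv) : ℚ :=
  α.sum fun p n => (n : ℚ) * (((A p.1 : ℚ) - (p.2 : ℚ)) / (A p.1 : ℚ))

/-- A coefficient function is admissible if it satisfies (Homogeneity) and the WDVV
equations (coefficientwise, in the variables `t_{i,j}` and `e^{t_{μ_A}}`). -/
structure IsAdmissible (A : Fin 3 → ℕ) (c : Expv → ℕ → ℂ) : Prop where
  homog : ∀ α : Expv, Valid A α → ∀ m : ℕ, c α m ≠ 0 → deg A α + (m : ℚ) * chi A = 2
  wdvv : ∀ a b d e' : Idx, ValidIdx A a → ValidIdx A b → ValidIdx A d → ValidIdx A e' →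
      ∀ β : Expv, Valid A β → ∀ m : ℕ,
        quadTerm A c a b d e' β m = quadTerm A c a d b e' β m

/-- (Cubic values). -/
def CubicValues (A : Fin 3 → ℕ) (c : Expv → ℕ → ℂ) : Prop :=
  (∀ (i₁ i₂ i₃ : Fin 3) (j₁ j₂ j₃ : ℕ),
      ValidPt A (i₁, j₁) → ValidPt A (i₂, j₂) → ValidPt A (i₃, j₃) →
      ¬(i₁ = i₂ ∧ i₂ = i₃) → c (e i₁ j₁ + e i₂ j₂ + e i₃ j₃) 0 = 0) ∧
  (∀ (i : Fin 3) (j₁ j₂ j₃ : ℕ),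
      ValidPt A (i, j₁) → ValidPt A (i, j₂) → ValidPt A (i, j₃) →
      sFactor j₁ j₂ j₃ * c (e i j₁ + e i j₂ + e i j₃) 0 =
        if j₁ + j₂ + j₃ = A i then (A i : ℂ)⁻¹ else 0)

/-- (Normalization). -/
def Normalization (A : Fin 3 → ℕ) (c : Expv → ℕ → ℂ) : Prop :=
  (2 ≤ A 0 → c (e 0 1 + e 1 1 + e 2 1) 1 = 1) ∧
  (A 0 = 1 → A 0 < A 1 → c (e 1 1 + e 2 1) 1 = 1) ∧
  (A 0 = 1 → A 1 = 1 → A 1 < A 2 → c (e 2 1) 1 = 1) ∧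
  (A 0 = 1 → A 1 = 1 → A 2 = 1 → c 0 1 = 1)

/-- (Separation). -/
def Separation (A : Fin 3 → ℕ) (c : Expv → ℕ → ℂ) : Prop :=
  ∀ γ : Expv, Valid A γ →
    ∀ (i₁ i₂ : Fin 3) (j₁ j₂ : ℕ), i₁ ≠ i₂ → ValidPt A (i₁, j₁) → ValidPt A (i₂, j₂) →
      e i₁ j₁ + e i₂ j₂ ≤ γ → c γ 0 = 0

/-- The automorphism of `ℤ^{μ_A−2}` exchanging `e_{i₁,j}` and `e_{i₂,j}` for all `j`. -/
def swapExp (i₁ i₂ : Fin 3) (α : Expv) : Expv :=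
  Finsupp.equivMapDomain ((Equiv.swap i₁ i₂).prodCongr (Equiv.refl ℕ)) α

/-- (Symmetry). -/
def Symmetry (A : Fin 3 → ℕ) (c : Expv → ℕ → ℂ) : Prop :=
  ∀ i₁ i₂ : Fin 3, A i₁ = A i₂ → ∀ α : Expv, Valid A α → ∀ m : ℕ,
    c (swapExp i₁ i₂ α) m = c α m



/-! ### Auxiliary lemmas for the proof -/

lemma dfac_pos (β : Expv) (ps : List Pt) : 0 < dfac β ps := by
  induction ps with
  | nil => simp [dfac]
  | cons p ps ih =>
    rw [dfac]
    refine Nat.mul_pos ?_ ih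
    have h : ((β + ((ps.map fun q => (Finsupp.single q 1 : Expv)).sum) + Finsupp.single p 1 : Expv)) p
        = β p + ((ps.map fun q => (Finsupp.single q 1 : Expv)).sum) p + 1 := by
      simp [Finsupp.add_apply]
    omega

lemma len_add (α β : Expv) : len (α + β) = len α + len β :=
  Finsupp.sum_add_index' (fun _ => rfl) (fun _ _ _ => rfl)

lemma len_single (p : Pt) : len (Finsupp.single p 1 : Expv) = 1 := by
  unfold len
  rw [Finsupp.sum_single_index]; rfl

lemma one_le_len_of_ne_zero {α : Expv} (h : α ≠ 0) : 1 ≤ len α := by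
  obtain ⟨p, hp⟩ := Finsupp.ne_iff.mp h
  have hp0 : α p ≠ 0 := by simpa using hp
  have hps : p ∈ α.support := Finsupp.mem_support_iff.mpr hp0
  calc 1 ≤ α p := Nat.one_le_iff_ne_zero.mpr hp0
    _ ≤ len α := Finset.single_le_sum (f := fun q => α q) (fun _ _ => Nat.zero_le _) hps

lemma valid_add {A : Fin 3 → ℕ} {α β : Expv} (hα : Valid A α) (hβ : Valid A β) :
    Valid A (α + β) := by
  intro p hp
  rcases Finset.mem_union.mp (Finsupp.support_add hp) with h | h
  exacts [hα p h, hβ p h]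

lemma valid_single {A : Fin 3 → ℕ} {p : Pt} (hp : ValidPt A p) :
    Valid A (Finsupp.single p 1) := by
  intro q hq
  have h := Finsupp.support_single_subset hq
  simp only [Finset.mem_singleton] at h
  rwa [h]

lemma valid_of_le {A : Fin 3 → ℕ} {α β : Expv} (h : α ≤ β) (hβ : Valid A β) : Valid A α := by
  intro p hp
  apply hβ
  rw [Finsupp.mem_support_iff] at hp ⊢
  have := Finsupp.le_def.mp h p
  omega

lemma sFactor_ne_zero (a b c : ℕ) : sFactor a b c ≠ 0 := by
  unfold sFactor
  split_ifs <;> norm_num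

lemma eta_mu_mu (A : Fin 3 → ℕ) : eta A .mu .mu = 0 := rfl
lemma eta_mu_pt (A : Fin 3 → ℕ) (i : Fin 3) (u : ℕ) : eta A .mu (.pt i u) = 0 := rfl
lemma eta_pt_pt (A : Fin 3 → ℕ) (i k : Fin 3) (u v : ℕ) : eta A (.pt i u) (.pt k v)
    = if i = k ∧ u + v = A i ∧ 1 ≤ u ∧ u ≤ A i - 1 then (A i : ℂ)⁻¹ else 0 := rfl

lemma der_one₁ (A : Fin 3 → ℕ) (c : Expv → ℕ → ℂ) (b d : Idx) (x : Expv) (m : ℕ) :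
    der A c .one b d x m = if x = 0 ∧ m = 0 then eta A b d else 0 := by
  unfold der; rw [if_pos rfl]

lemma der_one₃ (A : Fin 3 → ℕ) (c : Expv → ℕ → ℂ) (a b : Idx) (x : Expv) (m : ℕ)
    (ha : a ≠ Idx.one) (hb : b ≠ Idx.one) :
    der A c a b .one x m = if x = 0 ∧ m = 0 then eta A a b else 0 := by
  unfold der; rw [if_neg ha, if_neg hb, if_pos rfl]

lemma der_mu_mu_pt (A : Fin 3 → ℕ) (c : Expv → ℕ → ℂ) (k : Fin 3) (l : ℕ) (x : Expv) (m : ℕ) :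
    der A c .mu .mu (.pt k l) x m
      = (m : ℂ) ^ 2 * (dfac x [((k,l) : Pt)] : ℂ) * c (x + Finsupp.single (k,l) 1) m := by
  unfold der
  simp [ptsOf, muCount]

lemma der_pt_pt_pt (A : Fin 3 → ℕ) (c : Expv → ℕ → ℂ) (k i₁ i₂ : Fin 3) (v u₁ u₂ : ℕ)
    (x : Expv) (m : ℕ) :
    der A c (.pt k v) (.pt i₁ u₁) (.pt i₂ u₂) x m
      = (dfac x [((k,v) : Pt), (i₁,u₁), (i₂,u₂)] : ℂ) *
          c (x + Finsupp.single (k,v) 1 + Finsupp.single (i₁,u₁) 1 + Finsupp.single (i₂,u₂) 1) m := by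
  unfold der
  simp [ptsOf, muCount, add_assoc]

lemma der_mu_pt_pt_mzero (A : Fin 3 → ℕ) (c : Expv → ℕ → ℂ) (i k : Fin 3) (u l : ℕ) (x : Expv) :
    der A c .mu (.pt i u) (.pt k l) x 0 = 0 := by
  unfold der
  simp [ptsOf, muCount]

lemma der_pt_mu_pt_mzero (A : Fin 3 → ℕ) (c : Expv → ℕ → ℂ) (i k : Fin 3) (u l : ℕ) (x : Expv) :
    der A c (.pt k l) .mu (.pt i u) x 0 = 0 := by
  unfold der
  simp [ptsOf, muCount]

/-- `c α 1 = 0` whenever `|α| ≤ 2`, by homogeneity. -/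
lemma small_vanish (A : Fin 3 → ℕ) (hA01 : A 0 ≤ A 1) (hA12 : A 1 ≤ A 2) (ha₁ : 2 ≤ A 0)
    (c : Expv → ℕ → ℂ) (hadm : IsAdmissible A c)
    (α : Expv) (hval : Valid A α) (hlen : len α ≤ 2) : c α 1 = 0 := by
  by_contra hc
  have h := hadm.homog α hval 1 hc
  have hA2 : (2:ℚ) ≤ (A 2 : ℚ) := by exact_mod_cast le_trans ha₁ (le_trans hA01 hA12)
  have hA2pos : (0:ℚ) < (A 2 : ℚ) := by linarith
  set t : ℚ := (A 2 : ℚ)⁻¹ with ht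
  have htpos : 0 < t := by positivity
  have hinv2 : ∀ n : ℕ, 2 ≤ n → (n:ℚ)⁻¹ ≤ 1/2 := by
    intro n hn
    have hpos : (0:ℚ) < (n:ℚ) := by
      have h2 : (2:ℚ) ≤ (n:ℚ) := by exact_mod_cast hn
      linarith
    rw [inv_le_comm₀ hpos (by norm_num : (0:ℚ) < 1/2)]
    norm_num
    exact_mod_cast hn
  have hthalf : t ≤ 1/2 := by rw [ht]; exact hinv2 _ (le_trans ha₁ (le_trans hA01 hA12))
  have hdeg : deg A α ≤ (len α : ℚ) * (1 - t) := by
    unfold deg len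
    rw [Finsupp.sum, Finsupp.sum, Nat.cast_sum, Finset.sum_mul]
    apply Finset.sum_le_sum
    intro p hp
    have hv := hval p hp
    have hj1 : 1 ≤ p.2 := hv.1
    have hA2' : (A p.1 : ℚ) ≤ (A 2 : ℚ) := by
      have h3 : A p.1 ≤ A 2 := by
        obtain ⟨pi, pj⟩ := p
        fin_cases pi
        · exact le_trans hA01 hA12
        · exact hA12
        · exact le_refl _
      exact_mod_cast h3
    have hap : (2:ℚ) ≤ (A p.1 : ℚ) := by
      have h3 : 2 ≤ A p.1 := by
        obtain ⟨pi, pj⟩ := p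
        fin_cases pi
        · exact ha₁
        · exact le_trans ha₁ hA01
        · exact le_trans ha₁ (le_trans hA01 hA12)
      exact_mod_cast h3
    have happos : (0:ℚ) < (A p.1 : ℚ) := by linarith
    have hw : ((A p.1 : ℚ) - (p.2 : ℚ)) / (A p.1 : ℚ) ≤ 1 - t := by
      rw [div_le_iff₀ happos]
      have h1 : t * (A p.1 : ℚ) ≤ 1 := by
        rw [ht]
        rw [inv_mul_le_iff₀ hA2pos]
        linarith
      have hj : (1:ℚ) ≤ (p.2 : ℚ) := by exact_mod_cast hj1
      nlinarith
    have hn : (0:ℚ) ≤ (α p : ℚ) := by positivity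
    exact mul_le_mul_of_nonneg_left hw hn
  have hchi : chi A ≤ t := by
    unfold chi
    have h0 : (A 0 : ℚ)⁻¹ ≤ 1/2 := hinv2 _ ha₁
    have h1 : (A 1 : ℚ)⁻¹ ≤ 1/2 := hinv2 _ (le_trans ha₁ hA01)
    rw [ht]
    linarith
  have hlen' : (len α : ℚ) ≤ 2 := by exact_mod_cast hlen
  have h1t : (0:ℚ) ≤ 1 - t := by linarith
  have hlt : deg A α + (1:ℕ) * chi A < 2 := by
    push_cast
    nlinarith
  rw [h] at hlt
  exact absurd hlt (lt_irrefl _)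

/-- The right-hand side of our WDVV instance vanishes identically. -/
lemma quad_mu_pt_mu_pt (A : Fin 3 → ℕ) (c : Expv → ℕ → ℂ) (i i' : Fin 3) (u u' : ℕ)
    (β : Expv) : quadTerm A c .mu (.pt i u) .mu (.pt i' u') β 1 = 0 := by
  unfold quadTerm
  apply Finset.sum_eq_zero; intro x _
  apply Finset.sum_eq_zero; intro y hy
  have hysum : y.1 + y.2 = 1 := Finset.HasAntidiagonal.mem_antidiagonal.mp hy
  have hT1 : der A c .mu (.pt i u) .one x.1 y.1 = 0 := by
    rw [der_one₃ _ _ _ _ _ _ (by simp) (by simp), eta_mu_pt]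
    simp
  have hT2 : der A c .one .mu (.pt i' u') x.2 y.2 = 0 := by
    rw [der_one₁, eta_mu_pt]
    simp
  rw [hT1, hT2, zero_mul, mul_zero, zero_add, zero_add]
  apply Finset.sum_eq_zero; intro k _
  apply Finset.sum_eq_zero; intro l _
  rcases (by omega : y.1 = 0 ∨ y.2 = 0) with h | h
  · rw [h, der_mu_pt_pt_mzero, mul_zero, zero_mul]
  · rw [h, der_pt_mu_pt_mzero, mul_zero]


/-- Lemma (Case 1 of Proposition 3.8, for a₁ ≥ 2). -/
theorem degree_one_coefficient_vanishing (A : Fin 3 → ℕ) (hA : ∀ i, 1 ≤ A i) (hA01 : A 0 ≤ A 1) (hA12 : A 1 ≤ A 2)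
    (c : Expv → ℕ → ℂ) (hadm : IsAdmissible A c) (hcub : CubicValues A c)
    (ha₁ : 2 ≤ A 0)
    (γ : Expv) (hγ : Valid A γ) (hlen : len γ = 3)
    (i : Fin 3) (j : ℕ) (hv : ValidPt A (i, j)) (hai : 3 ≤ A i) (hj : 2 ≤ j)
    (hle : e i j ≤ γ) :
    c γ 1 = 0 := by
  have hj1 : 1 ≤ j := hv.1
  have hjle : j ≤ A i - 1 := hv.2
  have hAi3 : 3 ≤ A i := hai
  obtain ⟨jm, rfl⟩ : ∃ jm', j = jm' + 1 := ⟨j - 1, by omega⟩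
  have hjm1 : 1 ≤ jm := by omega
  set β : Expv := γ - e i (jm + 1) with hβdef
  have hβγ : β + e i (jm + 1) = γ := tsub_add_cancel_of_le hle
  have hβval : Valid A β := valid_of_le tsub_le_self hγ
  have hlenβ : len β = 2 := by
    have h := len_add β (e i (jm + 1))
    rw [hβγ, hlen] at h
    have h1 : len (e i (jm + 1)) = 1 := len_single (i, (jm + 1))
    omega
  have hvd : ValidIdx A (.pt i 1) := by
    show ValidPt A (i, 1)
    refine ⟨le_refl 1, ?_⟩
    show 1 ≤ A i - 1
    omega
  have hve : ValidIdx A (.pt i jm) := by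
    show ValidPt A (i, jm)
    refine ⟨hjm1, ?_⟩
    show jm ≤ A i - 1
    omega
  have hetaz : eta A (.pt i 1) (.pt i jm) = 0 := by
    rw [eta_pt_pt, if_neg]
    rintro ⟨-, h2, -⟩
    omega
  -- the WDVV instance
  have HW := hadm.wdvv .mu .mu (.pt i 1) (.pt i jm) trivial trivial hvd hve β hβval 1
  rw [quad_mu_pt_mu_pt] at HW
  -- evaluate the left-hand side
  rw [quadTerm] at HW
  rw [Finset.sum_eq_single_of_mem ((β, 0) : Expv × Expv)
      (by rw [Finset.HasAntidiagonal.mem_antidiagonal]; exact add_zero β) ?hxo] at HW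
  rw [Finset.sum_eq_single_of_mem ((1, 0) : ℕ × ℕ)
      (by rw [Finset.HasAntidiagonal.mem_antidiagonal] ; rfl) ?hyo] at HW
  rw [show ((β, 0) : Expv × Expv).1 = β from rfl, show ((β, 0) : Expv × Expv).2 = (0 : Expv) from rfl,
      show ((1, 0) : ℕ × ℕ).1 = 1 from rfl, show ((1, 0) : ℕ × ℕ).2 = 0 from rfl] at HW
  case hxo =>
    intro x hx hne
    have hxx : x.1 + x.2 = β := Finset.HasAntidiagonal.mem_antidiagonal.mp hx
    have hx2 : x.2 ≠ 0 := by
      intro h0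
      exact hne (Prod.ext (by rw [← hxx, h0, add_zero]) h0)
    have hx1le : len x.1 ≤ 1 := by
      have h2 := len_add x.1 x.2
      rw [hxx, hlenβ] at h2
      have h3 := one_le_len_of_ne_zero hx2
      omega
    have hx1v : Valid A x.1 := valid_of_le (hxx ▸ self_le_add_right x.1 x.2) hβval
    apply Finset.sum_eq_zero; intro y hy
    have hysum : y.1 + y.2 = 1 := Finset.HasAntidiagonal.mem_antidiagonal.mp hy
    have hT1 : der A c .mu .mu .one x.1 y.1 = 0 := by
      rw [der_one₃ _ _ _ _ _ _ (by simp) (by simp), eta_mu_mu]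
      simp
    have hT2 : der A c .one (.pt i 1) (.pt i jm) x.2 y.2 = 0 := by
      rw [der_one₁, hetaz]
      simp
    rw [hT1, hT2, zero_mul, mul_zero, zero_add, zero_add]
    apply Finset.sum_eq_zero; intro k _
    apply Finset.sum_eq_zero; intro l hl
    rcases (by omega : y.1 = 0 ∨ y.1 = 1) with h | h
    · rw [h, der_mu_mu_pt]
      norm_num
    · have hklv : ValidPt A (k, l) := by
        rw [Finset.mem_Icc] at hl
        exact ⟨hl.1, hl.2⟩
      have hz : c (x.1 + Finsupp.single (k, l) 1) 1 = 0 := by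
        apply small_vanish A hA01 hA12 ha₁ c hadm
        · exact valid_add hx1v (valid_single hklv)
        · rw [len_add, len_single]
          omega
      rw [h, der_mu_mu_pt, hz]
      ring
  case hyo =>
    intro y hy hne
    have hysum : y.1 + y.2 = 1 := Finset.HasAntidiagonal.mem_antidiagonal.mp hy
    have hy1 : y.1 = 0 := by
      rcases (by omega : y.1 = 0 ∨ (y.1 = 1 ∧ y.2 = 0)) with h | h
      · exact h
      · exact absurd (Prod.ext h.1 h.2) hne
    have hT1 : der A c .mu .mu .one β y.1 = 0 := by
      rw [der_one₃ _ _ _ _ _ _ (by simp) (by simp), eta_mu_mu]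
      simp
    have hT2 : der A c .one (.pt i 1) (.pt i jm) 0 y.2 = 0 := by
      rw [der_one₁, hetaz]
      simp
    rw [hT1, hT2, zero_mul, mul_zero, zero_add, zero_add]
    apply Finset.sum_eq_zero; intro k _
    apply Finset.sum_eq_zero; intro l _
    rw [hy1, der_mu_mu_pt]
    norm_num
  -- now HW is the single (x,y) = ((β,0),(1,0)) term
  have hT1 : der A c .mu .mu .one β 1 = 0 := by
    rw [der_one₃ _ _ _ _ _ _ (by simp) (by simp), eta_mu_mu]
    simp
  have hT2 : der A c .one (.pt i 1) (.pt i jm) 0 0 = 0 := by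
    rw [der_one₁, hetaz]
    simp
  rw [hT1, hT2, zero_mul, mul_zero, zero_add, zero_add] at HW
  rw [Finset.sum_eq_single_of_mem i (Finset.mem_univ i) ?hko] at HW
  rw [Finset.sum_eq_single_of_mem (jm + 1) (Finset.mem_Icc.mpr ⟨hj1, hjle⟩) ?hlo] at HW
  case hko =>
    intro k _ hki
    apply Finset.sum_eq_zero; intro l hl
    rw [Finset.mem_Icc] at hl
    have hvkl : ValidPt A (k, A k - l) := by
      refine ⟨?_, ?_⟩
      · show 1 ≤ A k - l
        omega
      · show A k - l ≤ A k - 1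
        omega
    have hcz : c (e k (A k - l) + e i 1 + e i jm) 0 = 0 := by
      apply hcub.1 k i i (A k - l) 1 jm hvkl hvd hve
      rintro ⟨h, -⟩
      exact hki h
    rw [der_pt_pt_pt]
    simp only [e] at hcz
    rw [zero_add, hcz]
    ring
  case hlo =>
    intro l hl hlj
    rw [Finset.mem_Icc] at hl
    have hvkl : ValidPt A (i, A i - l) := by
      refine ⟨?_, ?_⟩
      · show 1 ≤ A i - l
        omega
      · show A i - l ≤ A i - 1
        omega
    have hs := hcub.2 i (A i - l) 1 jm hvkl hvd hve
    rw [if_neg (by omega : ¬(A i - l + 1 + jm = A i))] at hs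
    have hcz : c (e i (A i - l) + e i 1 + e i jm) 0 = 0 :=
      (mul_eq_zero.mp hs).resolve_left (sFactor_ne_zero _ _ _)
    rw [der_pt_pt_pt]
    simp only [e] at hcz
    rw [zero_add, hcz]
    ring
  -- final term: k = i, l = jm + 1
  rw [der_mu_mu_pt, der_pt_pt_pt] at HW
  rw [show (Finsupp.single ((i, jm + 1) : Pt) 1 : Expv) = e i (jm + 1) from rfl, hβγ] at HW
  -- the cubic factor is nonzero
  have hvaj : ValidPt A (i, A i - (jm + 1)) := by
    refine ⟨?_, ?_⟩
    · show 1 ≤ A i - (jm + 1)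
      omega
    · show A i - (jm + 1) ≤ A i - 1
      omega
  have hs := hcub.2 i (A i - (jm + 1)) 1 jm hvaj hvd hve
  rw [if_pos (by omega : A i - (jm + 1) + 1 + jm = A i)] at hs
  have hcubne : c (e i (A i - (jm + 1)) + e i 1 + e i jm) 0 ≠ 0 := by
    intro h0
    rw [h0, mul_zero] at hs
    have hinv : ((A i : ℂ))⁻¹ ≠ 0 := by
      apply inv_ne_zero
      exact_mod_cast (by omega : A i ≠ 0)
    exact hinv hs.symm
  simp only [e] at hcubne
  have hAine : (A i : ℂ) ≠ 0 := by exact_mod_cast (by omega : A i ≠ 0)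
  have hd1 : ((dfac β [((i, jm + 1) : Pt)] : ℕ) : ℂ) ≠ 0 := by
    exact_mod_cast ne_of_gt (dfac_pos β _)
  have hd2 : ((dfac (0 : Expv) [((i, A i - (jm + 1)) : Pt), (i, 1), (i, jm)] : ℕ) : ℂ) ≠ 0 := by
    exact_mod_cast ne_of_gt (dfac_pos (0 : Expv) _)
  by_contra hne
  rw [zero_add] at HW
  refine (mul_ne_zero (mul_ne_zero ?_ ?_) (mul_ne_zero hd2 hcubne)) HW
  · exact hAine
  · have h1 : ((1 : ℕ) : ℂ) ^ 2 = 1 := by norm_num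
    rw [h1, one_mul]
    exact mul_ne_zero hd1 hne

end FrobeniusUniqueness
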